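/- Suppose for every real x > 89693 there is a prime in the interval (x, x + x/(ln x)³). Then for all n with p_n > 89693, (ln p_{n+1})⁴ - (ln p_n)⁴ < 4. -/

import Mathlib

/-- `prime n` is the n-th prime, with `prime 1 = 2`. -/
noncomputable def prime (n : ℕ) : ℕ := Nat.nth Nat.Prime (n - 1)

lemma log_one_add_le_aux {u : ℝ} (h0 : 0 < u) (h1 : u ≤ 1/2) :
    Real.log (1 + u) ≤ u - u^2/5 := by
  have hs0 : 0 ≤ u - u^2/5 := by nlinarith [mul_le_mul_of_nonneg_left h1 h0.le]
  have he := Real.add_one_le_exp ((u - u^2/5)/2)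
  have hb : (0:ℝ) ≤ 1 + (u - u^2/5)/2 := by linarith
  have hsq : (1 + (u - u^2/5)/2)^2 ≤ (Real.exp ((u - u^2/5)/2))^2 :=
    pow_le_pow_left₀ hb (by linarith) 2
  have hexp : (Real.exp ((u - u^2/5)/2))^2 = Real.exp (u - u^2/5) := by
    rw [← Real.exp_nat_mul]
    congr 1
    push_cast
    ring
  rw [Real.log_le_iff_le_exp (by linarith)]
  nlinarith [hsq, hexp.le, hexp.ge, sq_nonneg u, sq_nonneg (u * (1/2 - u)),
    mul_nonneg (mul_nonneg h0.le h0.le) h0.le,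
    mul_nonneg (mul_nonneg (mul_nonneg h0.le h0.le) h0.le) h0.le]

set_option maxHeartbeats 1000000 in
theorem log_pow_four_bound
    (h : ∀ x : ℝ, 89693 < x →
      ∃ q : ℕ, q.Prime ∧ x < q ∧ (q : ℝ) < x + x / Real.log x ^ 3) :
    ∀ n : ℕ, 89693 < (prime n : ℝ) →
      Real.log (prime (n+1)) ^ 4 - Real.log (prime n) ^ 4 < 4 := by
  intro n hn
  obtain ⟨q, hqp, hq1, hq2⟩ := h (prime n) hn
  have hp0 : (0:ℝ) < (prime n : ℝ) := by linarith
  have hpq : prime n < q := by exact_mod_cast hq1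
  have hinf := Nat.infinite_setOf_prime
  have h5 : n - 1 < Nat.count Nat.Prime q := (Nat.lt_nth_iff_count_lt hinf).2 hpq
  have hPq : prime (n+1) ≤ q := by
    have h1 : Nat.nth Nat.Prime n ≤ Nat.nth Nat.Prime (Nat.count Nat.Prime q) :=
      Nat.nth_monotone hinf (by omega)
    have h2 : Nat.nth Nat.Prime (Nat.count Nat.Prime q) = q := Nat.nth_count hqp
    rw [prime, Nat.add_sub_cancel]
    exact h1.trans_eq h2
  have hPprime : Nat.Prime (prime (n+1)) := by
    rw [prime]
    exact Nat.nth_mem_of_infinite hinf _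
  -- pass to reals
  obtain ⟨L, hLdef⟩ : ∃ L : ℝ, Real.log (prime n : ℝ) = L := ⟨_, rfl⟩
  obtain ⟨A, hAdef⟩ : ∃ A : ℝ, Real.log (prime (n+1) : ℝ) = A := ⟨_, rfl⟩
  rw [hLdef, hAdef]
  rw [hLdef] at hq2
  -- L > 11
  have hL : 11 < L := by
    rw [← hLdef, Real.lt_log_iff_exp_lt hp0]
    have h1 : Real.exp 11 = Real.exp 1 ^ 11 := by
      rw [← Real.exp_nat_mul]; norm_num
    have h2 : Real.exp 1 ^ 11 < 2.7182818286 ^ 11 :=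
      pow_lt_pow_left₀ Real.exp_one_lt_d9 (Real.exp_pos 1).le (by norm_num)
    have h3 : (2.7182818286:ℝ) ^ 11 < 89693 := by norm_num
    linarith
  have hL0 : (0:ℝ) < L := by linarith
  obtain ⟨u, hudef⟩ : ∃ u : ℝ, (1:ℝ) / L^3 = u := ⟨_, rfl⟩
  have hu0 : 0 < u := by rw [← hudef]; positivity
  have hL3 : u * L^3 = 1 := by
    rw [← hudef]; field_simp
  have hLbig : (2:ℝ) ≤ L^3 := by
    have h1 : (11:ℝ)^3 ≤ L^3 := pow_le_pow_left₀ (by norm_num) hL.le 3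
    linarith [h1]
  have hu2 : u ≤ 1/2 := by
    rw [← hudef]
    exact one_div_le_one_div_of_le (by norm_num) hLbig
  have hqlt : (q:ℝ) < (prime n : ℝ) * (1 + u) := by
    have heq : (prime n : ℝ) + (prime n : ℝ) / L^3 = (prime n : ℝ) * (1 + u) := by
      rw [← hudef]; field_simp
    linarith [hq2, heq.le, heq.ge]
  have hP0 : (0:ℝ) < (prime (n+1) : ℝ) := by exact_mod_cast hPprime.pos
  have hq0 : (0:ℝ) < (q:ℝ) := lt_trans hp0 hq1
  have hlogP : A ≤ L + Real.log (1 + u) := by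
    have h1 : Real.log ((prime (n+1) : ℕ):ℝ) ≤ Real.log (q:ℝ) :=
      Real.log_le_log hP0 (by exact_mod_cast hPq)
    have h2 : Real.log (q:ℝ) ≤ Real.log ((prime n : ℝ) * (1 + u)) :=
      Real.log_le_log hq0 hqlt.le
    rw [Real.log_mul (ne_of_gt hp0) (by linarith), hLdef] at h2
    rw [hAdef] at h1
    linarith
  obtain ⟨t, htdef⟩ : ∃ t : ℝ, Real.log (1 + u) = t := ⟨_, rfl⟩
  rw [htdef] at hlogP
  have ht0 : 0 ≤ t := by
    rw [← htdef]; exact Real.log_nonneg (by linarith)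
  have htu : t ≤ u - u^2/5 := by
    rw [← htdef]; exact log_one_add_le_aux hu0 hu2
  have hA0 : 0 ≤ A := by
    rw [← hAdef]; exact Real.log_nonneg (by exact_mod_cast hPprime.one_lt.le)
  have h4 : A ^ 4 ≤ (L + t)^4 := pow_le_pow_left₀ hA0 hlogP 4
  obtain ⟨w, hwdef⟩ : ∃ w : ℝ, t * L^3 = w := ⟨_, rfl⟩
  have hw0 : 0 ≤ w := by rw [← hwdef]; positivity
  have hw1 : w ≤ 1 := by
    have h1 := mul_le_mul_of_nonneg_right htu (by positivity : (0:ℝ) ≤ L^3)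
    rw [hwdef] at h1
    nlinarith [h1, hL3, mul_pos (mul_pos hu0 hu0) (pow_pos hL0 3)]
  have hw2 : w * L^3 ≤ L^3 - 1/5 := by
    have h1 := mul_le_mul_of_nonneg_right htu (by positivity : (0:ℝ) ≤ L^6)
    have h2 : u * L^6 = L^3 := by
      have he : u * L^6 = (u * L^3) * L^3 := by ring
      rw [he, hL3, one_mul]
    have h3 : u^2 * L^6 = 1 := by
      have he : u^2 * L^6 = (u * L^3) * (u * L^3) := by ring
      rw [he, hL3, one_mul]
    nlinarith [h1, h2, h3, hwdef.le, hwdef.ge, pow_pos hL0 3, pow_pos hL0 6]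
  have hw5 : w^4 ≤ 1 := by
    have h2 : w^2 ≤ 1 := by nlinarith
    nlinarith [h2, sq_nonneg w]
  have hwL : w * L^12 ≤ L^12 - (1/5) * L^9 := by
    have h1 := mul_le_mul_of_nonneg_right hw2 (by positivity : (0:ℝ) ≤ L^9)
    nlinarith [h1]
  have hnum : 6 * L^8 + 4 * L^4 + 1 < (4/5) * L^9 := by
    have p8 : (0:ℝ) < L^8 := pow_pos hL0 8
    have p4 : (0:ℝ) < L^4 := pow_pos hL0 4
    have h9 : 11 * L^8 < L^9 := by nlinarith [mul_lt_mul_of_pos_right hL p8]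
    have h4a : (14641:ℝ) < L^4 := by
      have := pow_lt_pow_left₀ hL (by norm_num : (0:ℝ) ≤ 11) (by norm_num : 4 ≠ 0)
      norm_num at this
      linarith
    have h8b : 14641 * L^4 < L^8 := by nlinarith [mul_lt_mul_of_pos_right h4a p4]
    linarith
  have hwkey : 4*w*L^12 + 6*w^2*L^8 + 4*w^3*L^4 + w^4 < 4*L^12 := by
    have hw3 : w^2 ≤ 1 := by nlinarith
    have hw4 : w^3 ≤ 1 := by nlinarith [hw3, sq_nonneg w]
    have e1 : w^2 * L^8 ≤ 1 * L^8 :=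
      mul_le_mul_of_nonneg_right hw3 (pow_pos hL0 8).le
    have e2 : w^3 * L^4 ≤ 1 * L^4 :=
      mul_le_mul_of_nonneg_right hw4 (pow_pos hL0 4).le
    nlinarith [e1, e2]
  have hLpow : (0:ℝ) < L^12 := by positivity
  have hfin : (4*L^3*t + 6*L^2*t^2 + 4*L*t^3 + t^4) * L^12 < 4 * L^12 := by
    have he : (4*L^3*t + 6*L^2*t^2 + 4*L*t^3 + t^4) * L^12
        = 4*(t*L^3)*L^12 + 6*(t*L^3)^2*L^8 + 4*(t*L^3)^3*L^4 + (t*L^3)^4 := by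
      ring
    rw [he, hwdef]
    exact hwkey
  have hkey : 4*L^3*t + 6*L^2*t^2 + 4*L*t^3 + t^4 < 4 :=
    lt_of_mul_lt_mul_right (by linarith [hfin]) hLpow.le
  have hexp4 : (L + t)^4 = L^4 + (4*L^3*t + 6*L^2*t^2 + 4*L*t^3 + t^4) := by ring
  linarith [h4, hkey, hexp4.le, hexp4.ge]
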